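/- Let G be the family of 3-element subsets of [7] given by G = {123, 124, 127, 136, 137, 146, 147, 157, 167, 234, 245, 246, 247, 257, 267, 345, 457} (where, e.g., 123 denotes the set {1,2,3}). Then Bob(G) holds but Alice(G) does not hold. In particular, the implication 'Bob(F) implies Alice(F) on odd boards' fails for families that are not pointwise-increasing. -/

import Mathlib

/-- The board `[n] = {1, …, n}` as a finite set of natural numbers. -/
def board (n : ℕ) : Finset ℕ := Finset.Icc 1 n

/-- The order-preserving relabelling of `[n] \ {x}` onto `[n-1]`:
elements below `x` are unchanged, elements above `x` drop by one. -/
def stdElt (x r : ℕ) : ℕ := if r < x then r else r - 1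

/-- Standardise a set avoiding `x`: relabel it via `stdElt x`. -/
def stdSet (x : ℕ) (S : Finset ℕ) : Finset ℕ := S.image (stdElt x)

/-- The standardised section `F_x^+ = { S \ {x} : x ∈ S ∈ F }`,
viewed as a family of subsets of `[n-1]`. -/
def secPlus (F : Set (Finset ℕ)) (x : ℕ) : Set (Finset ℕ) :=
  {T | ∃ S ∈ F, x ∈ S ∧ T = stdSet x (S.erase x)}

/-- The standardised section `F_x^- = { S ∈ F : x ∉ S }`,
viewed as a family of subsets of `[n-1]`. -/
def secMinus (F : Set (Finset ℕ)) (x : ℕ) : Set (Finset ℕ) :=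
  {T | ∃ S ∈ F, x ∉ S ∧ T = stdSet x S}

mutual
  /-- `AliceWins n k F`: Alice wins her `F`-game, where `F` is a family of
  `k`-subsets of `[n]`.  Terminal games (`k = 0` or `k = n`) are won iff `F`
  is nonempty; otherwise Alice needs a first offer `x` such that Bob wins both
  his `F_x^+`-game and his `F_x^-`-game. -/
  def AliceWins (n k : ℕ) (F : Set (Finset ℕ)) : Prop :=
    if h : k = 0 ∨ n ≤ k then F.Nonempty
    else ∃ x ∈ board n,
      BobWins (n - 1) (k - 1) (secPlus F x) ∧ BobWins (n - 1) k (secMinus F x)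
  termination_by n
  decreasing_by all_goals omega

  /-- `BobWins n k F`: Bob wins his `F`-game, where `F` is a family of
  `k`-subsets of `[n]`.  Terminal games (`k = 0` or `k = n`) are won iff `F`
  is nonempty; otherwise Bob needs, for every first offer `x`, that Alice wins
  her `F_x^+`-game or her `F_x^-`-game. -/
  def BobWins (n k : ℕ) (F : Set (Finset ℕ)) : Prop :=
    if h : k = 0 ∨ n ≤ k then F.Nonempty
    else ∀ x ∈ board n,
      AliceWins (n - 1) (k - 1) (secPlus F x) ∨ AliceWins (n - 1) k (secMinus F x)
  termination_by n
  decreasing_by all_goals omega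
end

/-- `S ⪯ T` in the pointwise order: the increasing enumerations of `S` and `T`
have the same length and are pointwise `≤`. -/
def PointwiseLE (S T : Finset ℕ) : Prop :=
  List.Forall₂ (· ≤ ·) (S.sort (· ≤ ·)) (T.sort (· ≤ ·))

/-- `F` consists of `k`-element subsets of `[n]`. -/
def IsFamilyOn (n k : ℕ) (F : Set (Finset ℕ)) : Prop :=
  ∀ S ∈ F, S ⊆ board n ∧ S.card = k

/-- `F` is pointwise-increasing as a family of `k`-subsets of `[n]`:
it is upwards closed in the pointwise order. -/
def IsIncreasingFamily (n k : ℕ) (F : Set (Finset ℕ)) : Prop :=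
  ∀ S T : Finset ℕ, S ∈ F → T ⊆ board n → T.card = k → PointwiseLE S T → T ∈ F

/-- The explicit family `G ⊆ [7]^(3)` from the concluding section. -/
def familyG : Set (Finset ℕ) :=
  {{1,2,3}, {1,2,4}, {1,2,7}, {1,3,6}, {1,3,7}, {1,4,6}, {1,4,7}, {1,5,7},
   {1,6,7}, {2,3,4}, {2,4,5}, {2,4,6}, {2,4,7}, {2,5,7}, {2,6,7}, {3,4,5},
   {4,5,7}}

def secPlusF (F : Finset (Finset ℕ)) (x : ℕ) : Finset (Finset ℕ) :=
  (F.filter (fun S => x ∈ S)).image (fun S => stdSet x (S.erase x))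

def secMinusF (F : Finset (Finset ℕ)) (x : ℕ) : Finset (Finset ℕ) :=
  (F.filter (fun S => x ∉ S)).image (fun S => stdSet x S)

lemma secPlus_coe (F : Finset (Finset ℕ)) (x : ℕ) :
    secPlus (↑F) x = ↑(secPlusF F x) := by
  ext T
  simp only [secPlus, secPlusF, Set.mem_setOf_eq, Finset.coe_image, Finset.coe_filter,
    Set.mem_image, Set.mem_setOf_eq, Finset.mem_coe]
  constructor
  · rintro ⟨S, hS, hx, rfl⟩; exact ⟨S, ⟨hS, hx⟩, rfl⟩
  · rintro ⟨S, ⟨hS, hx⟩, rfl⟩; exact ⟨S, hS, hx, rfl⟩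

lemma secMinus_coe (F : Finset (Finset ℕ)) (x : ℕ) :
    secMinus (↑F) x = ↑(secMinusF F x) := by
  ext T
  simp only [secMinus, secMinusF, Set.mem_setOf_eq, Finset.coe_image, Finset.coe_filter,
    Set.mem_image, Set.mem_setOf_eq, Finset.mem_coe]
  constructor
  · rintro ⟨S, hS, hx, rfl⟩; exact ⟨S, ⟨hS, hx⟩, rfl⟩
  · rintro ⟨S, ⟨hS, hx⟩, rfl⟩; exact ⟨S, hS, hx, rfl⟩

def gameB : ℕ → Bool → ℕ → Finset (Finset ℕ) → Bool
  | 0, _, _, F => decide F.Nonempty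
  | n + 1, a, k, F =>
    if k = 0 ∨ n + 1 ≤ k then decide F.Nonempty
    else if a then
      (List.range' 1 (n + 1)).any fun x =>
        gameB n false (k - 1) (secPlusF F x) && gameB n false k (secMinusF F x)
    else
      (List.range' 1 (n + 1)).all fun x =>
        gameB n true (k - 1) (secPlusF F x) || gameB n true k (secMinusF F x)

lemma mem_range'_board (n x : ℕ) : x ∈ List.range' 1 n ↔ x ∈ board n := by
  simp [List.mem_range'_1, board, Finset.mem_Icc]
  omega

lemma winsB_correct : ∀ n k (F : Finset (Finset ℕ)),
    (AliceWins n k ↑F ↔ gameB n true k F = true) ∧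
    (BobWins n k ↑F ↔ gameB n false k F = true) := by
  intro n
  induction n with
  | zero =>
    intro k F
    have hc : k = 0 ∨ 0 ≤ k := Or.inr (Nat.zero_le k)
    rw [AliceWins, BobWins]
    simp [hc, gameB]
  | succ m ih =>
    intro k F
    constructor
    · rw [AliceWins]
      by_cases hc : k = 0 ∨ m + 1 ≤ k
      · have hc' : k = 0 ∨ m < k := by omega
        simp [hc', gameB]
      · simp only [hc, dif_neg, not_false_iff, gameB, if_neg, if_true,
          List.any_eq_true, Bool.and_eq_true, mem_range'_board, Nat.add_sub_cancel]
        constructor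
        · rintro ⟨x, hx, h1, h2⟩
          exact ⟨x, hx, ((ih _ _).2).mp (by rwa [secPlus_coe] at h1),
            ((ih _ _).2).mp (by rwa [secMinus_coe] at h2)⟩
        · rintro ⟨x, hx, h1, h2⟩
          exact ⟨x, hx, by rw [secPlus_coe]; exact ((ih _ _).2).mpr h1,
            by rw [secMinus_coe]; exact ((ih _ _).2).mpr h2⟩
    · rw [BobWins]
      by_cases hc : k = 0 ∨ m + 1 ≤ k
      · have hc' : k = 0 ∨ m < k := by omega
        simp [hc', gameB]
      · simp only [hc, dif_neg, not_false_iff, gameB, if_neg, if_false,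
          Bool.false_eq_true, List.all_eq_true, Bool.or_eq_true, mem_range'_board,
          Nat.add_sub_cancel]
        constructor
        · intro h x hx
          rcases h x hx with h1 | h1
          · exact Or.inl (((ih _ _).1).mp (by rwa [secPlus_coe] at h1))
          · exact Or.inr (((ih _ _).1).mp (by rwa [secMinus_coe] at h1))
        · intro h x hx
          rcases h x hx with h1 | h1
          · exact Or.inl (by rw [secPlus_coe]; exact ((ih _ _).1).mpr h1)
          · exact Or.inr (by rw [secMinus_coe]; exact ((ih _ _).1).mpr h1)

def familyGF : Finset (Finset ℕ) :=
  {{1,2,3}, {1,2,4}, {1,2,7}, {1,3,6}, {1,3,7}, {1,4,6}, {1,4,7}, {1,5,7},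
   {1,6,7}, {2,3,4}, {2,4,5}, {2,4,6}, {2,4,7}, {2,5,7}, {2,6,7}, {3,4,5},
   {4,5,7}}

lemma familyG_coe : familyG = ↑familyGF := by
  ext S
  simp [familyG, familyGF]

set_option maxHeartbeats 10000000
/-- Bob wins his `G`-game but Alice does not win her
`G`-game; so the odd-board implication fails without monotonicity. -/
theorem counterexample_odd : BobWins 7 3 familyG ∧ ¬ AliceWins 7 3 familyG := by
  rw [familyG_coe, (winsB_correct 7 3 familyGF).2, (winsB_correct 7 3 familyGF).1]
  refine ⟨by decide, by decide⟩
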